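/- If a digraph H contains an invertible pair (a pair (x,y) with (x,y) and (y,x) in the same strong component of the pair digraph Ĥ²), then H does not admit a min-ordering. -/

import Mathlib

/-- If a digraph `H` contains an invertible pair — distinct vertices `x, y`
with `(x,y)` and `(y,x)` in the same strong component of the pair digraph `Ĥ²` — then
`H` admits no min-ordering. -/
theorem stmt_9 {V : Type*} (A : V → V → Prop)
    (Arc2 : V × V → V × V → Prop)
    (hArc2 : ∀ p q, Arc2 p q ↔
      ((A p.1 q.1 ∧ A p.2 q.2 ∧ ¬ A p.1 q.2) ∨
       (A q.1 p.1 ∧ A q.2 p.2 ∧ ¬ A q.2 p.1)))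
    (x y : V) (hxy : x ≠ y)
    (hinv1 : Relation.ReflTransGen Arc2 (x, y) (y, x))
    (hinv2 : Relation.ReflTransGen Arc2 (y, x) (x, y)) :
    ¬ ∃ lt : V → V → Prop, IsStrictTotalOrder V lt ∧
        ∀ u u' v v', A u v → A u' v' → lt u u' → lt v' v → A u v' := by
  rintro ⟨lt, hsto, hmin⟩
  have irr : ∀ a, ¬ lt a a := hsto.irrefl
  have tri : ∀ a b, lt a b ∨ a = b ∨ lt b a := fun a b => (em (lt a b)).elim Or.inl fun h1 => (em (lt b a)).elim (fun h2 => Or.inr (Or.inr h2)) fun h2 => Or.inr (Or.inl (hsto.trichotomous a b h1 h2))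
  -- single step lemma
  have step : ∀ p q : V × V, Arc2 p q → lt p.1 p.2 → lt q.1 q.2 := by
    rintro ⟨a1, a2⟩ ⟨b1, b2⟩ h hp
    rcases (hArc2 _ _).mp h with ⟨h1, h2, h3⟩ | ⟨h1, h2, h3⟩ <;>
      simp only at h1 h2 h3 hp ⊢
    · rcases tri b1 b2 with h | h | h
      · exact h
      · exact absurd (h ▸ h1) h3
      · exact absurd (hmin _ _ _ _ h1 h2 hp h) h3
    · rcases tri b1 b2 with h | h | h
      · exact h
      · exact absurd (h ▸ h1) h3
      · exact absurd (hmin _ _ _ _ h2 h1 h hp) h3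
  have walk : ∀ p q : V × V, Relation.ReflTransGen Arc2 p q → lt p.1 p.2 → lt q.1 q.2 := by
    intro p q h
    induction h with
    | refl => exact id
    | tail _ hst ih => exact fun hp => step _ _ hst (ih hp)
  have asym : ∀ a b, lt a b → lt b a → False := fun a b h1 h2 =>
    irr a (hsto.trans _ _ _ h1 h2)
  rcases tri x y with h | h | h
  · exact asym _ _ h (walk _ _ hinv1 h)
  · exact hxy h
  · exact asym _ _ h (walk _ _ hinv2 h)
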